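/- Let d, f, b, c : ℕ → ℤ be defined by d₀ = 1, f₀ = b₀ = c₀ = 0 and dₙ = 3d_{n−1} − 4f_{n−1}, fₙ = c_{n−1}, bₙ = 2d_{n−1} − 3f_{n−1}, cₙ = b_{n−1} for n ≥ 1. Then for every natural number n, as real numbers, dₙ = (8/5)(φ^{2n} + φ^{−2n}) − (1/5)(−1)ⁿ − 2, where φ = (1 + √5)/2 is the golden ratio. In particular dₙ grows like φ^{2n}, so the maps Φ = g∘crem₃ with g of type (C) have positive algebraic entropy S = 2·log φ and are non-integrable. -/

import Mathlib

noncomputable section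

open Filter

/-- The golden ratio `φ = (1 + √5)/2`. -/
def phi : ℝ := (1 + Real.sqrt 5) / 2

lemma sqrt5_sq : Real.sqrt 5 ^ 2 = 5 := Real.sq_sqrt (by norm_num)

lemma sqrt5_ge_two : (2:ℝ) ≤ Real.sqrt 5 := by
  nlinarith [sqrt5_sq, Real.sqrt_nonneg 5]

lemma phi_pos : 0 < phi := by
  unfold phi; linarith [Real.sqrt_nonneg 5]

lemma phi_ge : (3/2 : ℝ) ≤ phi := by unfold phi; linarith [sqrt5_ge_two]

lemma phi_sq : phi ^ 2 = phi + 1 := by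
  unfold phi; nlinarith [sqrt5_sq]

/-- Closed form of the degree sequence of a map `Φ = g∘crem₃` with `g` of type (C):
`dₙ = (8/5)(φ^{2n} + φ^{−2n}) − (1/5)(−1)ⁿ − 2`; in particular `dₙ ∼ φ^{2n}` as
`n → ∞` and `Φ` has positive algebraic entropy `S = 2 log φ`, hence is non-integrable. -/
theorem typeC_degree_closed_form (d fs b c : ℕ → ℤ)
    (hd0 : d 0 = 1) (hf0 : fs 0 = 0) (hb0 : b 0 = 0) (hc0 : c 0 = 0)
    (hd : ∀ n : ℕ, d (n + 1) = 3 * d n - 4 * fs n)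
    (hf : ∀ n : ℕ, fs (n + 1) = c n)
    (hb : ∀ n : ℕ, b (n + 1) = 2 * d n - 3 * fs n)
    (hc : ∀ n : ℕ, c (n + 1) = b n) :
    (∀ n : ℕ, (d n : ℝ) =
      (8 / 5) * (phi ^ (2 * (n : ℤ)) + phi ^ (-(2 * (n : ℤ)))) - (1 / 5) * (-1) ^ n - 2) ∧
    Tendsto (fun n : ℕ => Real.log (d n) / n) atTop (nhds (2 * Real.log phi)) := by
  obtain ⟨A, hA_def⟩ : ∃ A : ℝ, A = phi ^ 2 := ⟨_, rfl⟩
  have hApos : 0 < A := hA_def ▸ pow_pos phi_pos 2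
  have hAne : A ≠ 0 := ne_of_gt hApos
  have ha : A ^ 2 = 3 * A - 1 := by
    rw [hA_def]; nlinarith [phi_sq]
  obtain ⟨B, hB_def⟩ : ∃ B : ℝ, B = A⁻¹ := ⟨_, rfl⟩
  have hBval : B = 3 - A := by
    rw [hB_def]
    exact inv_eq_of_mul_eq_one_right (by linear_combination -ha)
  have hB0 : 0 ≤ B := by rw [hB_def]; positivity
  have hbq : B ^ 2 = 3 * B - 1 := by rw [hBval]; linear_combination ha
  have hA2 : 2 ≤ A := by
    rw [hA_def]; nlinarith [phi_ge, phi_pos]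
  have hA3 : A ≤ 3 := by linarith [hB0]
  have hB1 : B ≤ 1 := by linarith
  -- integer initial values
  have hd1 : d 1 = 3 := by
    have h : d 1 = 3 * d 0 - 4 * fs 0 := hd 0; omega
  have hd2 : d 2 = 9 := by
    have h1 : d 2 = 3 * d 1 - 4 * fs 1 := hd 1
    have h2 : fs 1 = c 0 := hf 0
    omega
  have hd3 : d 3 = 27 := by
    have h1 : d 3 = 3 * d 2 - 4 * fs 2 := hd 2
    have h2 : fs 2 = c 1 := hf 1
    have h3 : c 1 = b 0 := hc 0
    omega
  -- 4-step linear recurrence for d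
  have hrec : ∀ n : ℕ, d (n+4) = 3 * d (n+3) - 3 * d (n+1) + d n := by
    intro n
    have e1 : d (n+4) = 3 * d (n+3) - 4 * fs (n+3) := hd (n+3)
    have e2 : fs (n+3) = c (n+2) := hf (n+2)
    have e3 : c (n+2) = b (n+1) := hc (n+1)
    have e4 : b (n+1) = 2 * d n - 3 * fs n := hb n
    have e5 : d (n+1) = 3 * d n - 4 * fs n := hd n
    omega
  -- closed form in terms of A, B
  have key : ∀ n : ℕ,
      ((d n : ℝ) = 8/5 * (A ^ n + B ^ n) - 1/5 * (-1) ^ n - 2) ∧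
      ((d (n+1) : ℝ) = 8/5 * (A ^ (n+1) + B ^ (n+1)) - 1/5 * (-1) ^ (n+1) - 2) ∧
      ((d (n+2) : ℝ) = 8/5 * (A ^ (n+2) + B ^ (n+2)) - 1/5 * (-1) ^ (n+2) - 2) ∧
      ((d (n+3) : ℝ) = 8/5 * (A ^ (n+3) + B ^ (n+3)) - 1/5 * (-1) ^ (n+3) - 2) := by
    have p0 : (d 0 : ℝ) = 8/5 * (A ^ 0 + B ^ 0) - 1/5 * (-1) ^ 0 - 2 := by
      rw [hd0]; norm_num
    have p1 : (d 1 : ℝ) = 8/5 * (A ^ 1 + B ^ 1) - 1/5 * (-1) ^ 1 - 2 := by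
      rw [hd1, hBval]; push_cast; ring
    have p2 : (d 2 : ℝ) = 8/5 * (A ^ 2 + B ^ 2) - 1/5 * (-1) ^ 2 - 2 := by
      rw [hd2, hBval]; push_cast; linear_combination (-(16:ℝ)/5) * ha
    have p3 : (d 3 : ℝ) = 8/5 * (A ^ 3 + B ^ 3) - 1/5 * (-1) ^ 3 - 2 := by
      rw [hd3, hBval]; push_cast; linear_combination (-(72:ℝ)/5) * ha
    intro n
    induction n with
    | zero => exact ⟨p0, p1, p2, p3⟩
    | succ k ih =>
      refine ⟨ih.2.1, ih.2.2.1, ih.2.2.2, ?_⟩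
      have hcast : (d (k+4) : ℝ) = 3 * (d (k+3) : ℝ) - 3 * (d (k+1) : ℝ) + (d k : ℝ) := by
        exact_mod_cast hrec k
      rw [show k+1+3 = k+4 from rfl, hcast, ih.1, ih.2.1, ih.2.2.2]
      linear_combination (-(8:ℝ)/5) * A^k * (A^2-1) * ha + (-(8:ℝ)/5) * B^k * (B^2-1) * hbq
  have cf : ∀ n : ℕ, (d n : ℝ) = 8/5 * (A ^ n + B ^ n) - 1/5 * (-1) ^ n - 2 :=
    fun n => (key n).1
  -- rewrite zpow expressions
  have hz1 : ∀ n : ℕ, phi ^ (2 * (n : ℤ)) = A ^ n := by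
    intro n
    rw [show (2 * (n : ℤ)) = ((2*n : ℕ) : ℤ) by push_cast; ring, zpow_natCast, pow_mul,
      ← hA_def]
  have hz2 : ∀ n : ℕ, phi ^ (-(2 * (n : ℤ))) = B ^ n := by
    intro n
    rw [zpow_neg, hz1, hB_def, inv_pow]
  constructor
  · intro n
    rw [hz1, hz2, cf n]
  · -- growth bounds
    have neg_one_bd : ∀ n : ℕ, -1 ≤ ((-1:ℝ)) ^ n ∧ ((-1:ℝ)) ^ n ≤ 1 := by
      intro n
      have h : |((-1:ℝ)) ^ n| = 1 := by rw [abs_pow]; norm_num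
      constructor
      · linarith [neg_abs_le (((-1:ℝ)) ^ n), h.le]
      · linarith [le_abs_self (((-1:ℝ)) ^ n), h.le]
    have dlow : ∀ n : ℕ, 1 ≤ n → A ^ n ≤ (d n : ℝ) := by
      intro n hn
      match n, hn with
      | 1, _ =>
        rw [hd1]; push_cast; rw [pow_one]; linarith
      | (m+2), _ =>
        rw [cf (m+2)]
        have hBp : 0 ≤ B ^ (m+2) := pow_nonneg hB0 _
        have hAp : (4:ℝ) ≤ A ^ (m+2) := by
          calc (4:ℝ) = 2 ^ 2 := by norm_num
          _ ≤ A ^ 2 := by nlinarith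
          _ ≤ A ^ (m+2) := pow_le_pow_right₀ (by linarith) (by omega)
        linarith [(neg_one_bd (m+2)).2]
    have dhigh : ∀ n : ℕ, (d n : ℝ) ≤ 2 * A ^ n := by
      intro n
      rw [cf n]
      have hBp : B ^ n ≤ 1 := pow_le_one₀ hB0 hB1
      have hAp : (1:ℝ) ≤ A ^ n := one_le_pow₀ (by linarith : (1:ℝ) ≤ A)
      linarith [(neg_one_bd n).1]
    have dpos : ∀ n : ℕ, 1 ≤ n → (0:ℝ) < (d n : ℝ) := by
      intro n hn
      have h1 : (0:ℝ) < A ^ n := pow_pos hApos n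
      linarith [dlow n hn]
    have hlogA : Real.log A = 2 * Real.log phi := by
      rw [hA_def, Real.log_pow]; push_cast; ring
    rw [show (2 * Real.log phi) = Real.log A from hlogA.symm]
    apply tendsto_of_tendsto_of_tendsto_of_le_of_le'
      (g := fun _ : ℕ => Real.log A)
      (h := fun n : ℕ => Real.log 2 / n + Real.log A)
    · exact tendsto_const_nhds
    · have h0 : Tendsto (fun n : ℕ => Real.log 2 / n) atTop (nhds 0) :=
        tendsto_const_div_atTop_nhds_zero_nat _
      have := h0.add (tendsto_const_nhds (x := Real.log A) (f := atTop))
      simpa using this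
    · filter_upwards [eventually_ge_atTop 1] with n hn
      have hnpos : (0:ℝ) < (n:ℝ) := by exact_mod_cast hn
      rw [le_div_iff₀ hnpos]
      have h1 : Real.log (A ^ n) ≤ Real.log (d n : ℝ) :=
        Real.log_le_log (pow_pos hApos n) (dlow n hn)
      rw [Real.log_pow] at h1
      calc Real.log A * n = (n : ℝ) * Real.log A := by ring
      _ ≤ Real.log (d n : ℝ) := h1
    · filter_upwards [eventually_ge_atTop 1] with n hn
      have hnpos : (0:ℝ) < (n:ℝ) := by exact_mod_cast hn
      rw [div_le_iff₀ hnpos]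
      have h1 : Real.log (d n : ℝ) ≤ Real.log (2 * A ^ n) :=
        Real.log_le_log (dpos n hn) (dhigh n)
      rw [Real.log_mul (by norm_num) (ne_of_gt (pow_pos hApos n)), Real.log_pow] at h1
      calc Real.log (d n : ℝ) ≤ Real.log 2 + (n:ℝ) * Real.log A := h1
      _ = (Real.log 2 / n + Real.log A) * n := by field_simp
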